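/- Let q be a prime power and l ≥ 2. Let S be the image in 𝔽_{q^l}^*/𝔽_q^* of {x ∈ 𝔽_{q^l}^* : tr_{q^l/q}(x) = 1} under the natural projection. Then S is a ((q^l-1)/(q-1), q^{l-1}, q^{l-2}(q-1))-difference set in the cyclic group 𝔽_{q^l}^*/𝔽_q^* (the Singer difference set). -/

import Mathlib

open Finset
open scoped Pointwise Classical

/-- The formal sum `∑_{x ∈ s} x` of a finite subset of a group in the
integral group ring `ℤ[G]`. -/
noncomputable def fsum {G : Type*} [Group G] [DecidableEq G] (s : Finset G) :
    MonoidAlgebra ℤ G :=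
  ∑ x ∈ s, MonoidAlgebra.single x 1

/-- The relative trace `x ↦ ∑_{i<l} x^{q^i}`. -/
def relTrace {F : Type*} [CommRing F] (q l : ℕ) (x : F) : F :=
  ∑ i ∈ Finset.range l, x ^ q ^ i

/-- The subgroup `𝔽_q^*` of `𝔽_{q^l}^*`. -/
def baseSubgroup (K F : Type*) [Field K] [Field F] [Algebra K F] : Subgroup Fˣ :=
  (Units.map (algebraMap K F : K →+* F).toMonoidHom).range

/-- The Singer difference set: the image in `𝔽_{q^l}^*/𝔽_q^*` of
`{x ∈ 𝔽_{q^l}^* : tr_{q^l/q}(x) = 1}`. -/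
noncomputable def singerDS (K F : Type*) [Field K] [Field F] [Fintype K]
    [Fintype F] [Algebra K F] (q l : ℕ) : Finset (Fˣ ⧸ baseSubgroup K F) :=
  ((univ : Finset Fˣ).filter (fun x : Fˣ => relTrace q l (x : F) = 1)).image
    (QuotientGroup.mk (s := baseSubgroup K F))


set_option linter.unusedSectionVars false
set_option maxHeartbeats 1000000

namespace SingerAux
open Polynomial

section FieldLevel
variable {K F : Type*} [Field K] [Field F] [Fintype K] [Fintype F] [Algebra K F]
  (q l : ℕ) (hq : Fintype.card K = q) (hF : Fintype.card F = q ^ l) (hl : 2 ≤ l)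

include hq in
lemma exists_char : ∃ p n : ℕ, p.Prime ∧ q = p ^ n ∧ CharP F p := by
  obtain ⟨p, hpc⟩ := CharP.exists K
  have hp := hpc
  obtain ⟨n, hpp, hcard⟩ := FiniteField.card K p
  refine ⟨p, n, hpp, by rw [← hq, hcard], ?_⟩
  exact charP_of_injective_ringHom (algebraMap K F).injective p

include hq in
lemma q_ge_two : 2 ≤ q := hq ▸ Fintype.one_lt_card

include hq in
lemma pow_q_add : ∀ (m : ℕ) (x y : F), (x + y) ^ q ^ m = x ^ q ^ m + y ^ q ^ m := by
  intro m x y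
  obtain ⟨p, n, hpp, hqpn, hch⟩ := exists_char (F := F) q hq
  haveI : Fact p.Prime := ⟨hpp⟩
  haveI := hch
  rw [hqpn, ← pow_mul]
  exact add_pow_char_pow x y p (n*m)

include hq in
lemma sum_pow_q {ι : Type*} (s : Finset ι) (f : ι → F) (m : ℕ) :
    (∑ i ∈ s, f i) ^ q ^ m = ∑ i ∈ s, f i ^ q ^ m := by
  obtain ⟨p, n, hpp, hqpn, hch⟩ := exists_char (F := F) q hq
  haveI : Fact p.Prime := ⟨hpp⟩
  haveI := hch
  haveI : ExpChar F p := ExpChar.prime hpp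
  rw [hqpn, ← pow_mul]
  have h := map_sum (iterateFrobenius F p (n * m)) f s
  simp only [iterateFrobenius_def] at h
  exact h

include hq in
lemma T_add (x y : F) : relTrace q l (x + y) = relTrace q l x + relTrace q l y := by
  unfold relTrace
  rw [← Finset.sum_add_distrib]
  exact Finset.sum_congr rfl fun i _ => pow_q_add q hq i x y

include hq in
lemma T_zero : relTrace q l (0 : F) = 0 := by
  unfold relTrace
  have h2 : 2 ≤ q := q_ge_two q hq
  exact Finset.sum_eq_zero fun i _ => zero_pow (pow_ne_zero i (by omega))

include hq in
lemma c_pow_q_pow (c : K) (m : ℕ) : c ^ q ^ m = c := by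
  induction m with
  | zero => simp
  | succ k ih => rw [pow_succ, pow_mul, ih, ← hq, FiniteField.pow_card]

include hq in
lemma phi_pow (c : K) (m : ℕ) : (algebraMap K F c) ^ q ^ m = algebraMap K F c := by
  rw [← map_pow, c_pow_q_pow q hq]

include hq in
lemma T_smul (c : K) (x : F) :
    relTrace q l (algebraMap K F c * x) = algebraMap K F c * relTrace q l x := by
  unfold relTrace
  rw [Finset.mul_sum]
  refine Finset.sum_congr rfl fun i _ => ?_
  rw [mul_pow, phi_pow q hq]

include hq in
lemma pow_q_eq_iff_mem_range (y : F) :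
    y ^ q = y ↔ y ∈ Set.range (algebraMap K F) := by
  have h2 : 2 ≤ q := hq ▸ Fintype.one_lt_card
  have hsub : (univ.image (algebraMap K F) : Finset F) ⊆ univ.filter (fun y => y ^ q = y) := by
    intro y hy
    simp only [mem_image, mem_univ, true_and] at hy
    obtain ⟨c, rfl⟩ := hy
    simp only [mem_filter, mem_univ, true_and]
    rw [← map_pow, ← hq, FiniteField.pow_card]
  have hcard1 : (univ.image (algebraMap K F) : Finset F).card = q := by
    rw [Finset.card_image_of_injective _ (algebraMap K F).injective, card_univ, hq]
  have hroot : (univ.filter (fun y : F => y ^ q = y)).card ≤ q := by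
    have hdeg : (X ^ q - X : F[X]).natDegree = q := by
      rw [natDegree_sub_eq_left_of_natDegree_lt]
      · exact natDegree_X_pow q
      · rw [natDegree_X_pow, natDegree_X]; omega
    have hP : (X ^ q - X : F[X]) ≠ 0 := by
      intro h0
      rw [h0] at hdeg; simp at hdeg; omega
    calc (univ.filter (fun y : F => y ^ q = y)).card
        ≤ (X ^ q - X : F[X]).roots.toFinset.card := by
          apply Finset.card_le_card
          intro y hy
          simp only [mem_filter, mem_univ, true_and] at hy
          rw [Multiset.mem_toFinset, mem_roots hP]
          simp [IsRoot, hy]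
      _ ≤ Multiset.card (X ^ q - X : F[X]).roots := Multiset.toFinset_card_le _
      _ ≤ (X ^ q - X : F[X]).natDegree := card_roots' _
      _ = q := hdeg
  have heq : univ.image (algebraMap K F) = univ.filter (fun y : F => y ^ q = y) :=
    Finset.eq_of_subset_of_card_le hsub (by omega)
  constructor
  · intro hy
    have : y ∈ univ.filter (fun y : F => y ^ q = y) := by simp [hy]
    rw [← heq] at this
    simp only [mem_image, mem_univ, true_and] at this
    obtain ⟨c, rfl⟩ := this
    exact ⟨c, rfl⟩
  · rintro ⟨c, rfl⟩
    rw [← map_pow, ← hq, FiniteField.pow_card]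

include hq hF hl in
lemma T_pow_q (x : F) : (relTrace q l x) ^ q = relTrace q l x := by
  have h2 : 2 ≤ q := hq ▸ Fintype.one_lt_card
  have hxl : x ^ q ^ l = x := by rw [← hF, FiniteField.pow_card]
  have h1 : (relTrace q l x) ^ q = ∑ i ∈ Finset.range l, x ^ q ^ (i + 1) := by
    have := sum_pow_q (F := F) q hq (Finset.range l) (fun i => x ^ q ^ i) 1
    simp only [pow_one] at this
    rw [relTrace, this]
    refine Finset.sum_congr rfl fun i _ => ?_
    rw [← pow_mul, ← pow_succ]
  rw [h1, relTrace]
  have h3 := Finset.sum_range_succ' (fun i => x ^ q ^ i) l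
  have h4 := Finset.sum_range_succ (fun i => x ^ q ^ i) l
  simp only [pow_zero, pow_one, hxl] at h3 h4
  exact add_right_cancel (h3.symm.trans h4)

include hq hF hl in
lemma T_mem (x : F) : ∃ c : K, relTrace q l x = algebraMap K F c := by
  have := (pow_q_eq_iff_mem_range (F := F) q hq (relTrace q l x)).mp
    (T_pow_q q l hq hF hl x)
  obtain ⟨c, hc⟩ := this
  exact ⟨c, hc.symm⟩

include hq hF hl in
lemma exists_T_ne_zero : ∃ x : F, relTrace q l x ≠ 0 := by
  have h2 : 2 ≤ q := hq ▸ Fintype.one_lt_card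
  by_contra hcon
  push_neg at hcon
  set P : F[X] := ∑ i ∈ Finset.range l, X ^ q ^ i with hP
  have hPne : P ≠ 0 := by
    intro h0
    have hc : P.coeff 1 = 1 := by
      rw [hP, finset_sum_coeff]
      rw [Finset.sum_eq_single 0]
      · simp
      · intro i hi hne
        rw [coeff_X_pow]
        have h3 : q ≤ q ^ i := Nat.le_self_pow hne q
        have h4 : ¬ (1 = q ^ i) := by omega
        simp [h4]
      · simp
        omega
    rw [h0] at hc; simp at hc
  have hdeg : P.natDegree ≤ q ^ (l - 1) := by
    rw [hP]
    apply natDegree_sum_le_of_forall_le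
    intro i hi
    rw [natDegree_X_pow]
    exact Nat.pow_le_pow_right (by omega) (by simp at hi; omega)
  have hroots : (univ : Finset F) ⊆ P.roots.toFinset := by
    intro x _
    rw [Multiset.mem_toFinset, mem_roots hPne]
    have : P.eval x = relTrace q l x := by
      rw [hP, relTrace, eval_finset_sum]
      simp
    simp [IsRoot, this, hcon x]
  have hcard : Fintype.card F ≤ q ^ (l - 1) :=
    le_trans (le_trans (Finset.card_le_card hroots) (Multiset.toFinset_card_le _))
      (le_trans (card_roots' P) hdeg)
  rw [hF] at hcard
  have : q ^ (l - 1) < q ^ l := Nat.pow_lt_pow_right (by omega) (by omega)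
  omega

include hq hF hl in
lemma exists_T_eq_one : ∃ y : F, relTrace q l y = 1 := by
  obtain ⟨x, hx⟩ := exists_T_ne_zero q l hq hF hl
  obtain ⟨c, hc⟩ := T_mem q l hq hF hl x
  have hc0 : c ≠ 0 := by
    intro h; rw [h, map_zero] at hc; exact hx hc
  refine ⟨algebraMap K F c⁻¹ * x, ?_⟩
  rw [T_smul q l hq, hc, ← map_mul, inv_mul_cancel₀ hc0, map_one]

include hq hF hl in
lemma T_surj (c : K) : ∃ x : F, relTrace q l x = algebraMap K F c := by
  obtain ⟨y, hy⟩ := exists_T_eq_one q l hq hF hl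
  exact ⟨algebraMap K F c * y, by rw [T_smul q l hq, hy, mul_one]⟩

-- generic translation bijection for fibers
lemma fiber_shift {G : Type*} [AddCommGroup G] (S : F → G)
    (hadd : ∀ a b : F, S (a + b) = S a + S b) (t t' : G) (δ : F) (hδ : S δ = t' - t)
    (A B : Finset F) (hA : ∀ y, y ∈ A ↔ S y = t) (hB : ∀ y, y ∈ B ↔ S y = t') :
    A.card = B.card := by
  apply Finset.card_bij' (fun a _ => a + δ) (fun a _ => a - δ)
  · intro a ha
    rw [hB, hadd, (hA a).mp ha, hδ]
    abel
  · intro a ha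
    rw [hA]
    have h := hadd (a - δ) δ
    rw [sub_add_cancel, (hB a).mp ha, hδ] at h
    have h2 := eq_sub_of_add_eq h.symm
    rwa [sub_sub_cancel] at h2
  · intro a _; ring
  · intro a _; ring

include hq in
lemma T_neg (x : F) : relTrace q l (-x) = - relTrace q l x := by
  have h := T_add q l hq x (-x)
  rw [add_neg_cancel, T_zero q l hq] at h
  exact (neg_eq_of_add_eq_zero_right h.symm).symm

include hq in
lemma T_sub (x y : F) : relTrace q l (x - y) = relTrace q l x - relTrace q l y := by
  rw [sub_eq_add_neg, T_add q l hq, T_neg q l hq, ← sub_eq_add_neg]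

include hq hF hl in
lemma card_T_eq_one :
    (univ.filter fun x : F => relTrace q l x = 1).card = q ^ (l - 1) := by
  have h2 : 2 ≤ q := hq ▸ Fintype.one_lt_card
  have hmem : ∀ x : F, x ∈ (univ : Finset F) →
      relTrace q l x ∈ (univ.image (algebraMap K F) : Finset F) := by
    intro x _
    obtain ⟨c, hc⟩ := T_mem q l hq hF hl x
    exact mem_image.mpr ⟨c, mem_univ c, hc.symm⟩
  have hpart := Finset.card_eq_sum_card_fiberwise hmem
  have hfib : ∀ b ∈ (univ.image (algebraMap K F) : Finset F),
      (univ.filter fun x : F => relTrace q l x = b).card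
        = (univ.filter fun x : F => relTrace q l x = 1).card := by
    intro b hb
    simp only [mem_image, mem_univ, true_and] at hb
    obtain ⟨c, rfl⟩ := hb
    obtain ⟨δ, hδ⟩ := T_surj q l hq hF hl (1 - c)
    refine fiber_shift _ (T_add q l hq) (algebraMap K F c) 1 δ ?_ _ _
      (fun y => by simp) (fun y => by simp)
    rw [hδ, map_sub, map_one]
  rw [Finset.sum_congr rfl hfib, Finset.sum_const,
    Finset.card_image_of_injective _ (algebraMap K F).injective] at hpart
  simp only [card_univ, hq, hF, smul_eq_mul] at hpart
  have hql : q ^ l = q * q ^ (l - 1) := by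
    rw [← pow_succ']
    congr 1
    omega
  rw [hql] at hpart
  exact (Nat.eq_of_mul_eq_mul_left (by omega) hpart).symm

include hq hF hl in
lemma card_T_one_Tu_zero (u : F) (hu : u ∉ Set.range (algebraMap K F)) :
    (univ.filter fun y : F => relTrace q l y = 1 ∧ relTrace q l (u * y) = 0).card
      = q ^ (l - 2) := by
  have h2 : 2 ≤ q := hq ▸ Fintype.one_lt_card
  have hu0 : u ≠ 0 := by
    intro h; exact hu ⟨0, by rw [map_zero, h]⟩
  obtain ⟨y₁, hy₁⟩ := exists_T_eq_one q l hq hF hl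
  -- Step 1 : ∃ w, T w = 0 ∧ T (u*w) ≠ 0
  have step1 : ∃ w : F, relTrace q l w = 0 ∧ relTrace q l (u * w) ≠ 0 := by
    by_contra hcon
    push_neg at hcon
    obtain ⟨c₀, hc₀⟩ := T_mem q l hq hF hl (u * y₁)
    have hlin : ∀ y : F, relTrace q l (u * y)
        = algebraMap K F c₀ * relTrace q l y := by
      intro y
      obtain ⟨c, hc⟩ := T_mem q l hq hF hl y
      have hw : relTrace q l (y - algebraMap K F c * y₁) = 0 := by
        rw [T_sub q l hq, T_smul q l hq, hy₁, mul_one, hc, sub_self]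
      have h0 := hcon _ hw
      have h1 : relTrace q l (u * y)
          = relTrace q l (u * (y - algebraMap K F c * y₁))
            + relTrace q l (algebraMap K F c * (u * y₁)) := by
        rw [← T_add q l hq]
        congr 1
        ring
      rw [h1, h0, zero_add, T_smul q l hq, hc₀, hc, mul_comm]
    have hall : ∀ y : F, relTrace q l ((u - algebraMap K F c₀) * y) = 0 := by
      intro y
      have h1 : (u - algebraMap K F c₀) * y = u * y - algebraMap K F c₀ * y := by
        ring
      rw [h1, T_sub q l hq, hlin y, T_smul q l hq, sub_self]
    by_cases hne : u - algebraMap K F c₀ = 0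
    · exact hu ⟨c₀, (sub_eq_zero.mp hne).symm⟩
    · have h2 := hall ((u - algebraMap K F c₀)⁻¹ * y₁)
      rw [← mul_assoc, mul_inv_cancel₀ hne, one_mul, hy₁] at h2
      exact one_ne_zero h2
  obtain ⟨w₀, hw₀, hw₀u⟩ := step1
  obtain ⟨c₀, hc₀⟩ := T_mem q l hq hF hl (u * w₀)
  have hc₀0 : c₀ ≠ 0 := by
    intro h; rw [h, map_zero] at hc₀; exact hw₀u hc₀
  -- Step 2 : surjectivity
  have step2 : ∀ c : K, ∃ w : F, relTrace q l w = 0 ∧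
      relTrace q l (u * w) = algebraMap K F c := by
    intro c
    refine ⟨algebraMap K F (c * c₀⁻¹) * w₀, ?_, ?_⟩
    · rw [T_smul q l hq, hw₀, mul_zero]
    · rw [show u * (algebraMap K F (c * c₀⁻¹) * w₀)
          = algebraMap K F (c * c₀⁻¹) * (u * w₀) by ring]
      rw [T_smul q l hq, hc₀, ← map_mul]
      congr 1
      field_simp
  -- Step 3 : counting
  have hSadd : ∀ a b : F,
      (fun y : F => (relTrace q l y, relTrace q l (u * y))) (a + b)
        = (fun y : F => (relTrace q l y, relTrace q l (u * y))) a
          + (fun y : F => (relTrace q l y, relTrace q l (u * y))) b := by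
    intro a b
    have h1 := T_add q l hq a b
    have h2 : relTrace q l (u * (a + b))
        = relTrace q l (u * a) + relTrace q l (u * b) := by
      rw [mul_add, T_add q l hq]
    simp only [Prod.ext_iff, Prod.fst_add, Prod.snd_add]
    exact ⟨h1, h2⟩
  have hmem : ∀ x : F, x ∈ (univ.filter fun y : F => relTrace q l y = 1) →
      relTrace q l (u * x) ∈ (univ.image (algebraMap K F) : Finset F) := by
    intro x _
    obtain ⟨c, hc⟩ := T_mem q l hq hF hl (u * x)
    exact mem_image.mpr ⟨c, mem_univ c, hc.symm⟩
  have hpart := Finset.card_eq_sum_card_fiberwise hmem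
  have hfib : ∀ b ∈ (univ.image (algebraMap K F) : Finset F),
      ((univ.filter fun y : F => relTrace q l y = 1).filter
        fun y => relTrace q l (u * y) = b).card
      = ((univ.filter fun y : F => relTrace q l y = 1).filter
        fun y => relTrace q l (u * y) = 0).card := by
    intro b hb
    simp only [mem_image, mem_univ, true_and] at hb
    obtain ⟨c, rfl⟩ := hb
    obtain ⟨δ, hδ1, hδ2⟩ := step2 (0 - c)
    refine fiber_shift (fun y : F => (relTrace q l y, relTrace q l (u * y)))
      hSadd ((1 : F), algebraMap K F c) ((1 : F), (0 : F)) δ ?_ _ _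
      (fun y => by simp [Prod.ext_iff, and_assoc]) (fun y => by simp [Prod.ext_iff, and_assoc])
    have hsub : ((1 : F), (0 : F)) - ((1 : F), algebraMap K F c)
        = ((0 : F), - algebraMap K F c) := by
      simp [Prod.ext_iff]
    rw [hsub]
    simp only [Prod.ext_iff]
    refine ⟨hδ1, ?_⟩
    rw [hδ2, map_sub, map_zero]
    ring
  rw [Finset.sum_congr rfl hfib, Finset.sum_const,
    Finset.card_image_of_injective _ (algebraMap K F).injective,
    card_T_eq_one q l hq hF hl] at hpart
  simp only [card_univ, hq, smul_eq_mul] at hpart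
  have hres : ((univ.filter fun y : F => relTrace q l y = 1).filter
      fun y => relTrace q l (u * y) = 0).card = q ^ (l - 2) := by
    have hql : q ^ (l - 1) = q * q ^ (l - 2) := by
      rw [← pow_succ']
      congr 1
      omega
    rw [hql] at hpart
    exact (Nat.eq_of_mul_eq_mul_left (by omega) hpart).symm
  rw [← hres, Finset.filter_filter]

end FieldLevel

section UnitsLevel
variable {K F : Type*} [Field K] [Field F] [Fintype K] [Fintype F] [Algebra K F]
  (q l : ℕ) (hq : Fintype.card K = q) (hF : Fintype.card F = q ^ l) (hl : 2 ≤ l)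


lemma mem_baseSubgroup_iff (v : Fˣ) :
    v ∈ baseSubgroup K F ↔ (v : F) ∈ Set.range (algebraMap K F) := by
  constructor
  · rintro ⟨c, rfl⟩
    exact ⟨c, rfl⟩
  · rintro ⟨c, hc⟩
    have hc0 : c ≠ 0 := by
      intro h
      rw [h, map_zero] at hc
      exact v.ne_zero hc.symm
    refine ⟨Units.mk0 c hc0, ?_⟩
    ext
    exact hc

include hq in
lemma pi_injOn :
    Set.InjOn (QuotientGroup.mk (s := baseSubgroup K F))
      ((univ : Finset Fˣ).filter (fun x : Fˣ => relTrace q l (x : F) = 1)) := by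
  intro x hx y hy hxy
  simp only [coe_filter, Set.mem_setOf_eq, mem_univ, true_and] at hx hy
  rw [QuotientGroup.eq] at hxy
  rw [mem_baseSubgroup_iff] at hxy
  obtain ⟨c, hc⟩ := hxy
  have hyx : (y : F) = algebraMap K F c * (x : F) := by
    have h2 : (x : F) * ((x⁻¹ * y : Fˣ) : F) = (y : F) := by
      rw [← Units.val_mul, mul_inv_cancel_left]
    rw [← hc] at h2
    rw [← h2]
    ring
  have h1 : relTrace q l (y : F) = algebraMap K F c := by
    rw [hyx, T_smul q l hq, hx, mul_one]
  rw [hy] at h1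
  have : algebraMap K F c = 1 := h1.symm
  ext
  rw [hyx, this, one_mul]

include hq in
lemma card_units_filter (Q : F → Prop) :
    ((univ : Finset Fˣ).filter
      (fun y : Fˣ => relTrace q l (y : F) = 1 ∧ Q (y : F))).card
    = ((univ : Finset F).filter (fun y : F => relTrace q l y = 1 ∧ Q y)).card := by
  apply Finset.card_nbij (fun y : Fˣ => (y : F))
  · intro a ha
    simp only [mem_coe, mem_filter, mem_univ, true_and] at ha ⊢
    exact ha
  · intro a _ b _ hab
    exact Units.ext hab
  · intro a ha
    simp only [mem_coe, mem_filter, mem_univ, true_and, Set.mem_image] at ha ⊢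
    have ha0 : a ≠ 0 := by
      intro h
      rw [h, T_zero q l hq] at ha
      exact one_ne_zero ha.1.symm
    exact ⟨Units.mk0 a ha0, by simpa using ha, rfl⟩

include hq hF hl in
lemma card_Tfin :
    ((univ : Finset Fˣ).filter (fun x : Fˣ => relTrace q l (x : F) = 1)).card
      = q ^ (l - 1) := by
  have h := card_units_filter (F := F) q l hq (fun _ => True)
  simp only [and_true] at h
  rw [h, card_T_eq_one q l hq hF hl]

-- the central count
include hq hF hl in
lemma card_pairs (g : Fˣ ⧸ baseSubgroup K F) (u : Fˣ)
    (hu : QuotientGroup.mk (s := baseSubgroup K F) u = g) :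
    (((univ.filter (fun x : Fˣ => relTrace q l (x : F) = 1)) ×ˢ
      (univ.filter (fun x : Fˣ => relTrace q l (x : F) = 1))).filter
        (fun p : Fˣ × Fˣ => QuotientGroup.mk (s := baseSubgroup K F) p.1
          = g * QuotientGroup.mk (s := baseSubgroup K F) p.2)).card
    = ((univ.filter (fun x : Fˣ => relTrace q l (x : F) = 1)).filter
        (fun y : Fˣ => relTrace q l ((u : F) * (y : F)) ≠ 0)).card := by
  classical
  set Tfin := univ.filter (fun x : Fˣ => relTrace q l (x : F) = 1) with hTfin
  set π := QuotientGroup.mk (s := baseSubgroup K F) with hπ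
  -- fiberwise over second coordinate
  have hmem : ∀ p : Fˣ × Fˣ,
      p ∈ (Tfin ×ˢ Tfin).filter (fun p => π p.1 = g * π p.2) → p.2 ∈ Tfin := by
    intro p hp
    simp only [mem_filter, mem_product] at hp
    exact hp.1.2
  have hpart := Finset.card_eq_sum_card_fiberwise hmem
  rw [hpart]
  -- inner fiber card
  have hinner : ∀ y ∈ Tfin,
      (((Tfin ×ˢ Tfin).filter (fun p => π p.1 = g * π p.2)).filter
        (fun p => p.2 = y)).card
      = if relTrace q l ((u : F) * (y : F)) ≠ 0 then 1 else 0 := by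
    intro y hy
    simp only [hTfin, mem_filter, mem_univ, true_and] at hy
    have hxcount : (((Tfin ×ˢ Tfin).filter (fun p => π p.1 = g * π p.2)).filter
        (fun p => p.2 = y)).card
        = (Tfin.filter (fun x => π x = g * π y)).card := by
      apply Finset.card_nbij (fun p : Fˣ × Fˣ => p.1)
      · intro p hp
        simp only [mem_coe, mem_filter, mem_product] at hp ⊢
        obtain ⟨⟨⟨h1, h2⟩, h3⟩, h4⟩ := hp
        exact ⟨h1, by rw [← h4]; exact h3⟩
      · intro p hp p' hp' hpp
        simp only [mem_coe, mem_filter, mem_product] at hp hp'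
        have h2 : p.2 = p'.2 := by rw [hp.2, hp'.2]
        exact Prod.ext hpp h2
      · intro x hx
        simp only [mem_coe, mem_filter, mem_product, Set.mem_image] at hx ⊢
        exact ⟨(x, y), ⟨⟨⟨hx.1, by simpa [hTfin] using hy⟩, hx.2⟩, rfl⟩, rfl⟩
    rw [hxcount]
    by_cases hT : relTrace q l ((u : F) * (y : F)) = 0
    · simp only [hT, ne_eq, not_true_eq_false, if_false]
      rw [Finset.card_eq_zero]
      rw [Finset.eq_empty_iff_forall_notMem]
      intro x hx
      simp only [hTfin, mem_filter, mem_univ, true_and] at hx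
      obtain ⟨hx1, hx2⟩ := hx
      rw [← hu, hπ] at hx2
      have hx2' : (QuotientGroup.mk x : Fˣ ⧸ baseSubgroup K F)
          = QuotientGroup.mk (u * y) := by
        rw [hx2, QuotientGroup.mk_mul]
      rw [QuotientGroup.eq] at hx2'
      rw [mem_baseSubgroup_iff] at hx2'
      obtain ⟨c, hc⟩ := hx2'
      have hc0 : c ≠ 0 := by
        intro h
        rw [h, map_zero] at hc
        exact (x⁻¹ * (u * y)).ne_zero hc.symm
      have heq : ((u * y : Fˣ) : F) = algebraMap K F c * (x : F) := by
        have h2 : (x : F) * ((x⁻¹ * (u * y) : Fˣ) : F) = ((u * y : Fˣ) : F) := by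
          rw [← Units.val_mul, mul_inv_cancel_left]
        rw [← hc] at h2
        rw [← h2]; ring
      have : relTrace q l ((u : F) * (y : F)) = algebraMap K F c := by
        rw [← Units.val_mul, heq, T_smul q l hq, hx1, mul_one]
      rw [hT] at this
      exact hc0 ((map_eq_zero_iff _ (algebraMap K F).injective).mp this.symm)
    · simp only [hT, ne_eq, not_false_eq_true, if_true]
      -- there is exactly one x
      obtain ⟨c₀, hc₀⟩ := T_mem q l hq hF hl ((u : F) * (y : F))
      have hc₀0 : c₀ ≠ 0 := by
        intro h
        rw [h, map_zero] at hc₀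
        exact hT hc₀
      set cu : Fˣ := Units.map (algebraMap K F : K →+* F).toMonoidHom
        (Units.mk0 c₀ hc₀0)⁻¹ with hcu
      have hcuval : (cu : F) = algebraMap K F c₀⁻¹ := by
        simp [hcu]
      set x₀ : Fˣ := cu * u * y with hx₀
      have hx₀T : relTrace q l ((x₀ : F)) = 1 := by
        rw [hx₀]
        have : ((cu * u * y : Fˣ) : F) = algebraMap K F c₀⁻¹ * ((u : F) * (y : F)) := by
          rw [Units.val_mul, Units.val_mul, hcuval]; ring
        rw [this, T_smul q l hq, hc₀, ← map_mul, inv_mul_cancel₀ hc₀0, map_one]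
      have hcu1 : (QuotientGroup.mk cu : Fˣ ⧸ baseSubgroup K F) = 1 := by
        rw [QuotientGroup.eq_one_iff]
        exact ⟨(Units.mk0 c₀ hc₀0)⁻¹, rfl⟩
      have hx₀π : π x₀ = g * π y := by
        rw [hx₀, ← hu]
        show QuotientGroup.mk (cu * u * y)
          = QuotientGroup.mk u * QuotientGroup.mk y
        rw [← QuotientGroup.mk_mul, QuotientGroup.eq]
        have hval : (cu * u * y)⁻¹ * (u * y) = cu⁻¹ := by
          rw [mul_assoc, mul_comm cu (u * y), mul_inv_rev, mul_assoc,
            inv_mul_cancel, mul_one]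
        rw [hval]
        exact ⟨Units.mk0 c₀ hc₀0, by rw [hcu, map_inv, inv_inv]⟩
      have : Tfin.filter (fun x => π x = g * π y) = {x₀} := by
        rw [Finset.eq_singleton_iff_unique_mem]
        constructor
        · simp only [hTfin, mem_filter, mem_univ, true_and]
          exact ⟨hx₀T, hx₀π⟩
        · intro x hx
          simp only [hTfin, mem_filter, mem_univ, true_and] at hx
          refine pi_injOn q l hq ?_ ?_ ?_
          · simp only [hTfin, coe_filter, Set.mem_setOf_eq, mem_univ, true_and]
            exact hx.1
          · simp only [hTfin, coe_filter, Set.mem_setOf_eq, mem_univ, true_and]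
            exact hx₀T
          · show π x = π x₀
            rw [hx.2, hx₀π]
      rw [this, Finset.card_singleton]
  rw [Finset.sum_congr rfl hinner]
  exact (Finset.card_filter _ _).symm

lemma card_filter_ext {α : Type*} {s : Finset α} {p p' : α → Prop}
    {hp : DecidablePred p} {hp' : DecidablePred p'} (h : ∀ x, p x ↔ p' x) :
    (@Finset.filter α p hp s).card = (@Finset.filter α p' hp' s).card := by
  apply congrArg Finset.card
  ext x
  rw [Finset.mem_filter, Finset.mem_filter]
  exact and_congr_right fun _ => h x

include hq hF hl in
lemma card_Tfin_ne (u : Fˣ) (hu : (u : F) ∉ Set.range (algebraMap K F)) :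
    ((univ.filter (fun x : Fˣ => relTrace q l (x : F) = 1)).filter
      (fun y : Fˣ => relTrace q l ((u : F) * (y : F)) ≠ 0)).card
    = q ^ (l - 1) - q ^ (l - 2) := by
  classical
  have hcu := card_units_filter (F := F) q l hq
    (fun z : F => ¬ relTrace q l ((u : F) * z) = 0)
  rw [Finset.filter_filter]
  refine Eq.trans ?_ (Eq.trans hcu ?_)
  · exact card_filter_ext (fun x => Iff.rfl)
  · refine Eq.trans (?_ : _ = (((univ : Finset F).filter
        (fun y : F => relTrace q l y = 1)).filter
        (fun y : F => ¬ relTrace q l ((u : F) * y) = 0)).card) ?_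
    · rw [Finset.filter_filter]
      exact card_filter_ext (fun x => Iff.rfl)
    · have hsplit := Finset.card_filter_add_card_filter_not
        (s := (univ : Finset F).filter (fun y : F => relTrace q l y = 1))
        (p := fun y : F => relTrace q l ((u : F) * y) = 0)
      have b1 : (((univ : Finset F).filter (fun y : F => relTrace q l y = 1)).filter
          (fun y : F => relTrace q l ((u : F) * y) = 0)).card = q ^ (l - 2) := by
        rw [Finset.filter_filter]
        exact Eq.trans (card_filter_ext (fun x => Iff.rfl))
          (card_T_one_Tu_zero q l hq hF hl (u : F) hu)
      have b3 : ((univ : Finset F).filter (fun y : F => relTrace q l y = 1)).card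
          = q ^ (l - 1) := card_T_eq_one q l hq hF hl
      omega
end UnitsLevel

lemma fsum_apply {G : Type*} [Group G] [DecidableEq G] (s : Finset G) (g : G) :
    (fsum s).coeff g = if g ∈ s then (1 : ℤ) else 0 := by
  rw [fsum, MonoidAlgebra.coeff_sum, Finsupp.finset_sum_apply]
  rw [show (∑ x ∈ s, (MonoidAlgebra.single x (1:ℤ)).coeff g)
      = ∑ x ∈ s, if x = g then (1:ℤ) else 0 from
    Finset.sum_congr rfl fun x _ => Finsupp.single_apply]
  exact Finset.sum_ite_eq' s g (fun _ => (1:ℤ))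

section Final
variable {K F : Type*} [Field K] [Field F] [Fintype K] [Fintype F] [Algebra K F]
  (q l : ℕ) (hq : Fintype.card K = q) (hF : Fintype.card F = q ^ l) (hl : 2 ≤ l)


include hq hF in
lemma card_quot :
    Fintype.card (Fˣ ⧸ baseSubgroup K F) = (q ^ l - 1) / (q - 1) := by
  have h2 : 2 ≤ q := hq ▸ Fintype.one_lt_card
  have hcardF : Nat.card Fˣ = q ^ l - 1 := by
    rw [Nat.card_eq_fintype_card, Fintype.card_units, hF]
  have hcardH : Nat.card (baseSubgroup K F) = q - 1 := by
    have hinj : Function.Injective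
        ⇑(Units.map (algebraMap K F : K →+* F).toMonoidHom) :=
      Units.map_injective (algebraMap K F).injective
    have he := MonoidHom.ofInjective hinj
    rw [baseSubgroup, ← Nat.card_congr he.toEquiv, Nat.card_eq_fintype_card,
      Fintype.card_units, hq]
  have hm := Subgroup.card_eq_card_quotient_mul_card_subgroup (baseSubgroup K F)
  rw [hcardF, hcardH, Nat.card_eq_fintype_card] at hm
  rw [hm, Nat.mul_div_cancel _ (by omega)]

-- main counting: coefficient N g
include hq hF hl in
lemma coeff_count (g : Fˣ ⧸ baseSubgroup K F) :
    ((((univ.filter (fun x : Fˣ => relTrace q l (x : F) = 1)).image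
        (QuotientGroup.mk (s := baseSubgroup K F))) ×ˢ
      ((univ.filter (fun x : Fˣ => relTrace q l (x : F) = 1)).image
        (QuotientGroup.mk (s := baseSubgroup K F)))).filter
        (fun p => p.1 * p.2⁻¹ = g)).card
    = if g = 1 then q ^ (l - 1) else q ^ (l - 1) - q ^ (l - 2) := by
  classical
  set Tfin := univ.filter (fun x : Fˣ => relTrace q l (x : F) = 1) with hTfin
  set π := QuotientGroup.mk (s := baseSubgroup K F) with hπ
  -- transfer from D-pairs to Tfin-pairs
  have htrans : ((Tfin.image π ×ˢ Tfin.image π).filter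
        (fun p => p.1 * p.2⁻¹ = g)).card
      = ((Tfin ×ˢ Tfin).filter (fun p : Fˣ × Fˣ => π p.1 = g * π p.2)).card := by
    symm
    apply Finset.card_nbij (fun p : Fˣ × Fˣ => (π p.1, π p.2))
    · intro p hp
      simp only [mem_coe, mem_filter, mem_product] at hp ⊢
      refine ⟨⟨mem_image_of_mem _ hp.1.1, mem_image_of_mem _ hp.1.2⟩, ?_⟩
      rw [hp.2, mul_inv_cancel_right]
    · intro p hp p' hp' hpp
      simp only [mem_coe, mem_filter, mem_product] at hp hp'
      simp only [Prod.ext_iff] at hpp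
      have h1 := pi_injOn q l hq (by exact_mod_cast hp.1.1) (by exact_mod_cast hp'.1.1) hpp.1
      have h2 := pi_injOn q l hq (by exact_mod_cast hp.1.2) (by exact_mod_cast hp'.1.2) hpp.2
      exact Prod.ext h1 h2
    · intro d hd
      simp only [mem_coe, mem_filter, mem_product, Set.mem_image] at hd ⊢
      obtain ⟨⟨hd1, hd2⟩, hd3⟩ := hd
      obtain ⟨x₁, hx₁, hx₁e⟩ := mem_image.mp hd1
      obtain ⟨x₂, hx₂, hx₂e⟩ := mem_image.mp hd2
      refine ⟨(x₁, x₂), ⟨⟨hx₁, hx₂⟩, ?_⟩, Prod.ext hx₁e hx₂e⟩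
      show π x₁ = g * π x₂
      rw [hx₁e, hx₂e, ← hd3, inv_mul_cancel_right]
  rw [htrans]
  by_cases hg : g = 1
  · subst hg
    rw [if_pos rfl]
    have h1 := card_pairs q l hq hF hl (1 : Fˣ ⧸ baseSubgroup K F) 1 rfl
    rw [← hTfin, ← hπ] at h1
    rw [h1]
    have : Tfin.filter (fun y : Fˣ => relTrace q l (((1:Fˣ) : F) * (y : F)) ≠ 0)
        = Tfin := by
      apply Finset.filter_true_of_mem
      intro y hy
      simp only [hTfin, mem_filter, mem_univ, true_and] at hy
      simp only [Units.val_one, one_mul, hy]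
      exact one_ne_zero
    rw [this, ← hTfin] at *
    exact card_Tfin q l hq hF hl
  · simp only [hg, if_false]
    set u : Fˣ := Quotient.out g with hu_def
    have hu : π u = g := QuotientGroup.out_eq' g
    have hunr : (u : F) ∉ Set.range (algebraMap K F) := by
      intro hmem
      have : u ∈ baseSubgroup K F := (mem_baseSubgroup_iff (K := K) (F := F) u).mpr hmem
      have : π u = 1 := (QuotientGroup.eq_one_iff u).mpr this
      exact hg (by rw [← hu, this])
    have h1 := card_pairs q l hq hF hl g u hu
    rw [← hTfin, ← hπ] at h1
    rw [h1, hTfin]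
    exact card_Tfin_ne q l hq hF hl u hunr

end Final

lemma coeff_formula {G : Type*} [Group G] [DecidableEq G] (D : Finset G) (g : G) :
    (fsum D * fsum D⁻¹).coeff g
      = (((D ×ˢ D).filter (fun p : G × G => p.1 * p.2⁻¹ = g)).card : ℤ) := by
  classical
  have hinv : fsum (D⁻¹) = ∑ b ∈ D, MonoidAlgebra.single b⁻¹ (1 : ℤ) := by
    rw [fsum, Finset.inv_def, Finset.sum_image (by intro x _ y _ h; exact inv_injective h)]
  have hmul : fsum D * fsum D⁻¹
      = ∑ p ∈ D ×ˢ D, MonoidAlgebra.single (p.1 * p.2⁻¹) (1 : ℤ) := by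
    calc fsum D * fsum D⁻¹
        = ∑ a ∈ D, ∑ b ∈ D, MonoidAlgebra.single (a * b⁻¹) (1 : ℤ) := by
          rw [fsum, hinv, Finset.sum_mul_sum]
          exact Finset.sum_congr rfl fun a _ => Finset.sum_congr rfl fun b _ => by
            rw [MonoidAlgebra.single_mul_single, one_mul]
      _ = ∑ p ∈ D ×ˢ D, MonoidAlgebra.single (p.1 * p.2⁻¹) (1 : ℤ) :=
          (Finset.sum_product' D D
            (fun a b => MonoidAlgebra.single (a * b⁻¹) (1 : ℤ))).symm
  rw [hmul]
  calc (∑ p ∈ D ×ˢ D, MonoidAlgebra.single (p.1 * p.2⁻¹) (1 : ℤ)).coeff g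
      = ∑ p ∈ D ×ˢ D, (if p.1 * p.2⁻¹ = g then (1 : ℤ) else 0) := by
        rw [MonoidAlgebra.coeff_sum, Finsupp.finset_sum_apply]
        exact Finset.sum_congr rfl fun p _ => Finsupp.single_apply
    _ = (((D ×ˢ D).filter (fun p : G × G => p.1 * p.2⁻¹ = g)).card : ℤ) :=
        Finset.sum_boole _ _


end SingerAux

open SingerAux in
/-- the Singer difference set is a
`((q^l-1)/(q-1), q^{l-1}, q^{l-2}(q-1))`-difference set in `𝔽_{q^l}^*/𝔽_q^*`. -/
theorem stmt7 {K F : Type*} [Field K] [Field F] [Fintype K] [Fintype F]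
    [Algebra K F] (q l : ℕ) (hq : Fintype.card K = q)
    (hF : Fintype.card F = q ^ l) (hl : 2 ≤ l) :
    (singerDS K F q l).card = q ^ (l - 1) ∧
    Fintype.card (Fˣ ⧸ baseSubgroup K F) = (q ^ l - 1) / (q - 1) ∧
    fsum (singerDS K F q l) * fsum (singerDS K F q l)⁻¹ =
      ((q : ℤ) ^ (l - 2)) • 1 +
        ((q : ℤ) ^ (l - 2) * ((q : ℤ) - 1)) •
          fsum (univ : Finset (Fˣ ⧸ baseSubgroup K F)) := by
  have h2 : 2 ≤ q := hq ▸ Fintype.one_lt_card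
  have hD : (singerDS K F q l).card = q ^ (l - 1) := by
    rw [singerDS, Finset.card_image_of_injOn (pi_injOn q l hq), card_Tfin q l hq hF hl]
  refine ⟨hD, card_quot q l hq hF, ?_⟩
  apply MonoidAlgebra.ext
  apply Finsupp.ext
  intro g
  have hlhs := coeff_formula (singerDS K F q l) g
  have hN := coeff_count q l hq hF hl g
  rw [show ((singerDS K F q l ×ˢ singerDS K F q l).filter
      (fun p => p.1 * p.2⁻¹ = g)).card
    = if g = 1 then q ^ (l - 1) else q ^ (l - 1) - q ^ (l - 2) from hN] at hlhs
  rw [hlhs]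
  -- RHS
  have hrhs : (((q : ℤ) ^ (l - 2)) • (1 : MonoidAlgebra ℤ (Fˣ ⧸ baseSubgroup K F)) +
      ((q : ℤ) ^ (l - 2) * ((q : ℤ) - 1)) •
        fsum (univ : Finset (Fˣ ⧸ baseSubgroup K F))).coeff g
      = (q : ℤ) ^ (l - 2) * (if (1 : Fˣ ⧸ baseSubgroup K F) = g then 1 else 0)
        + (q : ℤ) ^ (l - 2) * ((q : ℤ) - 1) := by
    rw [MonoidAlgebra.coeff_add, Finsupp.add_apply, MonoidAlgebra.coeff_smul_apply,
      MonoidAlgebra.coeff_smul_apply, fsum_apply,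
      if_pos (mem_univ g), MonoidAlgebra.one_def]
    rw [show (MonoidAlgebra.single (1 : Fˣ ⧸ baseSubgroup K F) (1:ℤ)).coeff g
      = if (1 : Fˣ ⧸ baseSubgroup K F) = g then 1 else 0 from Finsupp.single_apply]
    simp only [smul_eq_mul, mul_one]
  rw [hrhs]
  have hpow : (q : ℤ) ^ (l - 1) = (q : ℤ) ^ (l - 2) * q := by
    rw [← pow_succ]
    congr 1
    omega
  by_cases hg : g = 1
  · subst hg
    rw [if_pos rfl, if_pos rfl]
    push_cast
    linear_combination hpow
  · rw [if_neg hg, if_neg (fun h => hg h.symm)]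
    have hle : q ^ (l - 2) ≤ q ^ (l - 1) := Nat.pow_le_pow_right (by omega) (by omega)
    push_cast [Nat.cast_sub hle]
    linear_combination hpow
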